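/- Let C be an abelian monoidal category whose tensor product is additive and exact in each variable. Let λ, μ be half-braidings on X, Y, let f : X → Y intertwine λ and μ, and factor f = e ≫ m through its image I, with e : X → I epi and m : I → Y mono. Then there exists a unique half-braiding ν on I such that e intertwines λ and ν; moreover this same ν also makes m intertwine ν and μ (i.e. the half-braiding induced on the image from λ via the epi agrees with the one induced from μ via the mono). -/

import Mathlib

open CategoryTheory CategoryTheory.Limits CategoryTheory.MonoidalCategory

universe v u

section Aux

variable {C : Type u} [Category.{v} C] [Abelian C]

lemma aux_epi_map (F : C ⥤ C) [F.Additive] {X Y : C} (f : X ⟶ Y) [Epi f]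
    [PreservesColimit (parallelPair f 0) F] : Epi (F.map f) := by
  apply Preadditive.epi_of_cokernel_zero
  rw [← cancel_mono (cokernelComparison f F), zero_comp, π_comp_cokernelComparison,
    cokernel.π_of_epi, F.map_zero]

lemma aux_mono_map (F : C ⥤ C) [F.Additive] {X Y : C} (f : X ⟶ Y) [Mono f]
    [PreservesLimit (parallelPair f 0) F] : Mono (F.map f) := by
  apply Preadditive.mono_of_kernel_zero
  rw [← cancel_epi (kernelComparison f F), comp_zero, kernelComparison_comp_ι,
    kernel.ι_of_mono, F.map_zero]

lemma aux_ker_zero (F : C ⥤ C) [F.Additive] {X Y : C} (f : X ⟶ Y)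
    [PreservesLimit (parallelPair f 0) F] {T : C} (g : F.obj X ⟶ T)
    (h : F.map (kernel.ι f) ≫ g = 0) : kernel.ι (F.map f) ≫ g = 0 := by
  rw [← cancel_epi (kernelComparison f F), comp_zero, ← Category.assoc,
    kernelComparison_comp_ι, h]

end Aux

section AuxMap

variable {C : Type u} [Category.{v} C] [MonoidalCategory C]

lemma tensorLeft_map (X : C) {Y Z : C} (f : Y ⟶ Z) : (tensorLeft X).map f = X ◁ f := rfl

lemma tensorRight_map (X : C) {Y Z : C} (f : Y ⟶ Z) : (tensorRight X).map f = f ▷ X := rfl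

end AuxMap

theorem image_halfBraiding_exists_unique
    {C : Type u} [Category.{v} C] [MonoidalCategory C] [Abelian C]
    [∀ A : C, (tensorLeft A).Additive] [∀ A : C, (tensorRight A).Additive]
    (hkerL : ∀ (A : C) ⦃X Y : C⦄ (f : X ⟶ Y),
      PreservesLimit (parallelPair f 0) (tensorLeft A))
    (hkerR : ∀ (A : C) ⦃X Y : C⦄ (f : X ⟶ Y),
      PreservesLimit (parallelPair f 0) (tensorRight A))
    (hcokerL : ∀ (A : C) ⦃X Y : C⦄ (f : X ⟶ Y),
      PreservesColimit (parallelPair f 0) (tensorLeft A))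
    (hcokerR : ∀ (A : C) ⦃X Y : C⦄ (f : X ⟶ Y),
      PreservesColimit (parallelPair f 0) (tensorRight A))
    {X Y I : C} (l : HalfBraiding X) (m : HalfBraiding Y) (f : X ⟶ Y)
    (hf : ∀ A : C, (f ▷ A) ≫ (m.β A).hom = (l.β A).hom ≫ (A ◁ f))
    (e : X ⟶ I) (mI : I ⟶ Y) [Epi e] [Mono mI] (hfac : f = e ≫ mI) :
    (∃! ν : HalfBraiding I,
      ∀ A : C, (e ▷ A) ≫ (ν.β A).hom = (l.β A).hom ≫ (A ◁ e)) ∧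
    (∀ ν : HalfBraiding I,
      (∀ A : C, (e ▷ A) ≫ (ν.β A).hom = (l.β A).hom ≫ (A ◁ e)) →
      ∀ A : C, (mI ▷ A) ≫ (m.β A).hom = (ν.β A).hom ≫ (A ◁ mI)) := by
  have epiR : ∀ A : C, Epi (e ▷ A) := fun A => by
    haveI := hcokerR A e
    have := aux_epi_map (tensorRight A) e
    rwa [tensorRight_map] at this
  have epiL : ∀ A : C, Epi (A ◁ e) := fun A => by
    haveI := hcokerL A e
    have := aux_epi_map (tensorLeft A) e
    rwa [tensorLeft_map] at this
  have monoR : ∀ A : C, Mono (mI ▷ A) := fun A => by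
    haveI := hkerR A mI
    have := aux_mono_map (tensorRight A) mI
    rwa [tensorRight_map] at this
  have monoL : ∀ A : C, Mono (A ◁ mI) := fun A => by
    haveI := hkerL A mI
    have := aux_mono_map (tensorLeft A) mI
    rwa [tensorLeft_map] at this
  have kerfe : kernel.ι e ≫ f = 0 := by
    rw [hfac, kernel.condition_assoc, zero_comp]
  -- descent condition for the hom
  have hz1 : ∀ A : C, kernel.ι (e ▷ A) ≫ ((l.β A).hom ≫ (A ◁ e)) = 0 := fun A => by
    haveI := hkerR A e
    haveI := monoL A
    have h0 : (kernel.ι e ▷ A) ≫ ((l.β A).hom ≫ (A ◁ e)) = 0 := by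
      rw [← cancel_mono (A ◁ mI), zero_comp, Category.assoc, Category.assoc,
        ← MonoidalCategory.whiskerLeft_comp, ← hfac, ← hf A, ← comp_whiskerRight_assoc,
        kerfe, ← tensorRight_map, Functor.map_zero, zero_comp]
    have h2 := aux_ker_zero (tensorRight A) e ((l.β A).hom ≫ (A ◁ e))
      (by rw [tensorRight_map]; exact h0)
    simpa only [tensorRight_map] using h2
  -- descent condition for the inv
  have hf' : ∀ A : C, (l.β A).inv ≫ (f ▷ A) = (A ◁ f) ≫ (m.β A).inv := by
    intro A
    rw [Iso.inv_comp_eq, ← Category.assoc, ← hf A, Category.assoc, Iso.hom_inv_id,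
      Category.comp_id]
  have hz2 : ∀ A : C, kernel.ι (A ◁ e) ≫ ((l.β A).inv ≫ (e ▷ A)) = 0 := fun A => by
    haveI := hkerL A e
    haveI := monoR A
    have h0 : (A ◁ kernel.ι e) ≫ ((l.β A).inv ≫ (e ▷ A)) = 0 := by
      rw [← cancel_mono (mI ▷ A), zero_comp, Category.assoc, Category.assoc,
        ← comp_whiskerRight, ← hfac, hf' A, ← MonoidalCategory.whiskerLeft_comp_assoc,
        kerfe, ← tensorLeft_map, Functor.map_zero, zero_comp]
    have h2 := aux_ker_zero (tensorLeft A) e ((l.β A).inv ≫ (e ▷ A))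
      (by rw [tensorLeft_map]; exact h0)
    simpa only [tensorLeft_map] using h2
  let νhom : ∀ A : C, I ⊗ A ⟶ A ⊗ I := fun A =>
    letI := epiR A
    Abelian.epiDesc (e ▷ A) ((l.β A).hom ≫ (A ◁ e)) (hz1 A)
  let νinv : ∀ A : C, A ⊗ I ⟶ I ⊗ A := fun A =>
    letI := epiL A
    Abelian.epiDesc (A ◁ e) ((l.β A).inv ≫ (e ▷ A)) (hz2 A)
  have hν : ∀ A : C, (e ▷ A) ≫ νhom A = (l.β A).hom ≫ (A ◁ e) := fun A => by
    letI := epiR A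
    exact Abelian.comp_epiDesc _ _ _
  have hν' : ∀ A : C, (A ◁ e) ≫ νinv A = (l.β A).inv ≫ (e ▷ A) := fun A => by
    letI := epiL A
    exact Abelian.comp_epiDesc _ _ _
  have hi1 : ∀ A : C, νhom A ≫ νinv A = 𝟙 (I ⊗ A) := fun A => by
    haveI := epiR A
    rw [← cancel_epi (e ▷ A), ← Category.assoc, hν A, Category.assoc, hν' A,
      Iso.hom_inv_id_assoc, Category.comp_id]
  have hi2 : ∀ A : C, νinv A ≫ νhom A = 𝟙 (A ⊗ I) := fun A => by
    haveI := epiL A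
    rw [← cancel_epi (A ◁ e), ← Category.assoc, hν' A, Category.assoc, hν A,
      Iso.inv_hom_id_assoc, Category.comp_id]
  let ν : HalfBraiding I :=
    { β := fun A => ⟨νhom A, νinv A, hi1 A, hi2 A⟩
      monoidal := by
        intro U U'
        haveI := epiR (U ⊗ U')
        dsimp only
        rw [← cancel_epi (e ▷ (U ⊗ U')), hν (U ⊗ U'), l.monoidal]
        simp only [Category.assoc]
        rw [associator_inv_naturality_left_assoc, ← comp_whiskerRight_assoc, hν U,
          comp_whiskerRight_assoc, associator_naturality_middle_assoc,
          ← MonoidalCategory.whiskerLeft_comp_assoc, hν U',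
          MonoidalCategory.whiskerLeft_comp_assoc, associator_inv_naturality_right]
      naturality := by
        intro U U' g
        haveI := epiR U
        dsimp only
        rw [← cancel_epi (e ▷ U), ← whisker_exchange_assoc, hν U', l.naturality_assoc,
          ← whisker_exchange]
        conv_rhs => rw [← Category.assoc, hν U, Category.assoc] }
  have hνe : ∀ A : C, (e ▷ A) ≫ (ν.β A).hom = (l.β A).hom ≫ (A ◁ e) := hν
  have uniq : ∀ ν' : HalfBraiding I,
      (∀ A : C, (e ▷ A) ≫ (ν'.β A).hom = (l.β A).hom ≫ (A ◁ e)) → ν' = ν := by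
    rintro ⟨β', mon', nat'⟩ h'
    obtain ⟨βν, monν, natν⟩ := ν
    have : β' = βν := funext fun A => Iso.ext (by
      haveI := epiR A
      rw [← cancel_epi (e ▷ A), h' A]
      exact (hνe A).symm)
    cases this
    rfl
  refine ⟨⟨ν, hνe, uniq⟩, ?_⟩
  intro ν' h' A
  haveI := epiR A
  rw [← cancel_epi (e ▷ A), ← comp_whiskerRight_assoc, ← hfac, hf A, ← Category.assoc,
    h' A, Category.assoc, ← MonoidalCategory.whiskerLeft_comp, ← hfac]
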